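/- (Concentration of Gaussian norm) Let x ~ N(0, σ²Iₙ) on ℝⁿ. Then for every t ≥ 0, the probability that |‖x‖₂ - σ√n| ≥ t is at most 2·exp(-c·t²/σ²) for some universal constant c > 0. In particular, for fixed σ, the ratio ‖x‖₂/(σ√n) converges in probability to 1 as n → ∞. -/

import Mathlib

open MeasureTheory ProbabilityTheory

noncomputable def stdNormalCDF (t : ℝ) : ℝ :=
  ∫ x in Set.Iic t, Real.exp (-x ^ 2 / 2) / Real.sqrt (2 * Real.pi)

noncomputable def stdNormalCDFInv : ℝ → ℝ := Function.invFun stdNormalCDF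

noncomputable def gaussianPi (n : ℕ) (x₀ : EuclideanSpace ℝ (Fin n)) (σ : ℝ) :
    Measure (EuclideanSpace ℝ (Fin n)) :=
  Measure.map (WithLp.toLp 2) (Measure.pi fun i => gaussianReal (x₀ i) ⟨σ ^ 2, sq_nonneg σ⟩)

set_option maxHeartbeats 800000

open Real

section Aux

variable {σ l : ℝ}

lemma gauss_int (hσ : 0 < σ) (hl : 2 * l * σ ^ 2 < 1) :
    ∫ y, rexp (l * y ^ 2) ∂(gaussianReal 0 ⟨σ ^ 2, sq_nonneg σ⟩) =
      (Real.sqrt (1 - 2 * l * σ ^ 2))⁻¹ := by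
  have hσ2 : (0:ℝ) < σ ^ 2 := pow_pos hσ 2
  have hA : (0:ℝ) < 1 - 2 * l * σ ^ 2 := by linarith
  have hv : (⟨σ ^ 2, sq_nonneg σ⟩ : NNReal) ≠ 0 := by
    simp [← NNReal.coe_ne_zero, hσ2.ne']
  rw [gaussianReal_of_var_ne_zero 0 hv]
  have hmeas : Measurable fun y : ℝ => (gaussianPDFReal 0 ⟨σ ^ 2, sq_nonneg σ⟩ y).toNNReal :=
    (measurable_gaussianPDFReal _ _).real_toNNReal
  rw [show gaussianPDF 0 (⟨σ ^ 2, sq_nonneg σ⟩ : NNReal) =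
      fun y => ((gaussianPDFReal 0 ⟨σ ^ 2, sq_nonneg σ⟩ y).toNNReal : ENNReal) from rfl,
    integral_withDensity_eq_integral_smul hmeas]
  have hb : (0:ℝ) < (1 - 2 * l * σ ^ 2) / (2 * σ ^ 2) := by positivity
  have key : ∀ y : ℝ, ((gaussianPDFReal 0 ⟨σ ^ 2, sq_nonneg σ⟩ y).toNNReal : NNReal) • rexp (l * y ^ 2)
      = (Real.sqrt (2 * π * σ ^ 2))⁻¹ * rexp (-((1 - 2 * l * σ ^ 2) / (2 * σ ^ 2)) * y ^ 2) := by
    intro y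
    rw [NNReal.smul_def, Real.coe_toNNReal _ (gaussianPDFReal_nonneg 0 ⟨σ ^ 2, sq_nonneg σ⟩ y)]
    show (Real.sqrt (2 * π * ((⟨σ ^ 2, sq_nonneg σ⟩ : NNReal) : ℝ)))⁻¹
        * rexp (-(y - 0) ^ 2 / (2 * ((⟨σ ^ 2, sq_nonneg σ⟩ : NNReal) : ℝ))) * rexp (l * y ^ 2) = _
    have hcoe : (((⟨σ ^ 2, sq_nonneg σ⟩ : NNReal)) : ℝ) = σ ^ 2 := rfl
    rw [hcoe, mul_assoc, ← Real.exp_add]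
    congr 1
    field_simp
    ring
  simp_rw [key]
  rw [integral_const_mul, integral_gaussian]
  rw [show π / ((1 - 2 * l * σ ^ 2) / (2 * σ ^ 2)) = 2 * π * σ ^ 2 / (1 - 2 * l * σ ^ 2) by
      field_simp]
  rw [Real.sqrt_div (by positivity) _]
  have h2 : Real.sqrt (2 * π * σ ^ 2) ≠ 0 := by positivity
  field_simp

lemma gauss_integrable (hσ : 0 < σ) (hl : 2 * l * σ ^ 2 < 1) :
    Integrable (fun y : ℝ => rexp (l * y ^ 2)) (gaussianReal 0 ⟨σ ^ 2, sq_nonneg σ⟩) := by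
  have hσ2 : (0:ℝ) < σ ^ 2 := pow_pos hσ 2
  have hA : (0:ℝ) < 1 - 2 * l * σ ^ 2 := by linarith
  have hv : (⟨σ ^ 2, sq_nonneg σ⟩ : NNReal) ≠ 0 := by
    simp [← NNReal.coe_ne_zero, hσ2.ne']
  rw [gaussianReal_of_var_ne_zero 0 hv]
  rw [integrable_withDensity_iff (measurable_gaussianPDF 0 ⟨σ ^ 2, sq_nonneg σ⟩)
    (ae_of_all _ fun y => ENNReal.ofReal_lt_top)]
  have key : ∀ y : ℝ, rexp (l * y ^ 2) * (gaussianPDF 0 (⟨σ ^ 2, sq_nonneg σ⟩ : NNReal) y).toReal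
      = (Real.sqrt (2 * π * σ ^ 2))⁻¹ * rexp (-((1 - 2 * l * σ ^ 2) / (2 * σ ^ 2)) * y ^ 2) := by
    intro y
    rw [gaussianPDF_def 0 ⟨σ ^ 2, sq_nonneg σ⟩, ENNReal.toReal_ofReal (gaussianPDFReal_nonneg 0 ⟨σ ^ 2, sq_nonneg σ⟩ y)]
    show rexp (l * y ^ 2) * ((Real.sqrt (2 * π * ((⟨σ ^ 2, sq_nonneg σ⟩ : NNReal) : ℝ)))⁻¹
        * rexp (-(y - 0) ^ 2 / (2 * ((⟨σ ^ 2, sq_nonneg σ⟩ : NNReal) : ℝ)))) = _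
    have hcoe : (((⟨σ ^ 2, sq_nonneg σ⟩ : NNReal)) : ℝ) = σ ^ 2 := rfl
    rw [hcoe, mul_comm, mul_assoc, ← Real.exp_add]
    congr 1
    field_simp
    ring
  simp_rw [key]
  exact (integrable_exp_neg_mul_sq (by positivity)).const_mul _

lemma pi_exp (n : ℕ) (hσ : 0 < σ) (hl : 2 * l * σ ^ 2 < 1) :
    ∫ x, rexp (l * ∑ i, (x i) ^ 2) ∂(gaussianPi n 0 σ) =
      ((Real.sqrt (1 - 2 * l * σ ^ 2))⁻¹) ^ n := by
  letI : MeasureSpace ℝ := ⟨gaussianReal 0 ⟨σ ^ 2, sq_nonneg σ⟩⟩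
  haveI : SigmaFinite (volume : Measure ℝ) := by
    have h : SigmaFinite (gaussianReal 0 ⟨σ ^ 2, sq_nonneg σ⟩) := by
      haveI := instIsProbabilityMeasureGaussianReal 0 ⟨σ ^ 2, sq_nonneg σ⟩; infer_instance
    exact h
  have h1 : gaussianPi n 0 σ = Measure.map (WithLp.toLp 2) (volume : Measure (Fin n → ℝ)) := rfl
  calc ∫ x, rexp (l * ∑ i, (x i) ^ 2) ∂(gaussianPi n 0 σ)
      = ∫ x : Fin n → ℝ, ∏ i, rexp (l * (x i) ^ 2) := by
        rw [h1, ← MeasurableEquiv.coe_toLp, integral_map_equiv]; congr 1; ext x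
        rw [← Real.exp_sum, Finset.mul_sum]; rfl
    _ = (∫ y : ℝ, rexp (l * y ^ 2)) ^ n := by
        simpa [← volume_pi] using MeasureTheory.integral_fintype_prod_eq_pow (ι := Fin n) (μ := volume) (fun y => rexp (l * y ^ 2))
    _ = ((Real.sqrt (1 - 2 * l * σ ^ 2))⁻¹) ^ n := by
        rw [show (volume : Measure ℝ) = gaussianReal 0 ⟨σ ^ 2, sq_nonneg σ⟩ from rfl,
          gauss_int hσ hl]

lemma pi_exp_integrable (n : ℕ) (hσ : 0 < σ) (hl : 2 * l * σ ^ 2 < 1) :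
    Integrable (fun x : EuclideanSpace ℝ (Fin n) => rexp (l * ∑ i, (x i) ^ 2))
      (gaussianPi n 0 σ) := by
  letI : MeasureSpace ℝ := ⟨gaussianReal 0 ⟨σ ^ 2, sq_nonneg σ⟩⟩
  haveI : SigmaFinite (volume : Measure ℝ) := by
    have h : SigmaFinite (gaussianReal 0 ⟨σ ^ 2, sq_nonneg σ⟩) := by
      haveI := instIsProbabilityMeasureGaussianReal 0 ⟨σ ^ 2, sq_nonneg σ⟩; infer_instance
    exact h
  have h1 : gaussianPi n 0 σ = Measure.map (WithLp.toLp 2) (volume : Measure (Fin n → ℝ)) := rfl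
  rw [h1, ← MeasurableEquiv.coe_toLp, integrable_map_equiv]
  have h2 : Integrable (fun x : Fin n → ℝ => ∏ i, rexp (l * (x i) ^ 2)) volume :=
    Integrable.fintype_prod (f := fun _ : Fin n => fun y : ℝ => rexp (l * y ^ 2))
      (fun _ => gauss_integrable hσ hl)
  refine h2.congr (ae_of_all _ fun x => ?_)
  simp only [← Real.exp_sum, Finset.mul_sum, Function.comp_apply]
  rfl

lemma tail_ub (n : ℕ) (hσ : 0 < σ) {a : ℝ} (hl : 0 ≤ l) (hl2 : 2 * l * σ ^ 2 < 1) :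
    gaussianPi n 0 σ {x | a ≤ ∑ i, (x i) ^ 2} ≤
      ENNReal.ofReal (rexp (-l * a) * ((Real.sqrt (1 - 2 * l * σ ^ 2))⁻¹) ^ n) := by
  haveI : IsProbabilityMeasure (gaussianPi n 0 σ) :=
    haveI := fun i : Fin n =>
      instIsProbabilityMeasureGaussianReal ((0 : EuclideanSpace ℝ (Fin n)) i) ⟨σ ^ 2, sq_nonneg σ⟩
    Measure.isProbabilityMeasure_map (WithLp.measurable_toLp 2 _).aemeasurable
  have h := measure_ge_le_exp_mul_mgf
    (X := fun x : EuclideanSpace ℝ (Fin n) => ∑ i, (x i) ^ 2)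
    (μ := gaussianPi n 0 σ) (t := l) a hl (pi_exp_integrable n hσ hl2)
  rw [show mgf (fun x : EuclideanSpace ℝ (Fin n) => ∑ i, (x i) ^ 2) (gaussianPi n 0 σ) l
      = ∫ x, rexp (l * ∑ i, (x i) ^ 2) ∂(gaussianPi n 0 σ) from rfl, pi_exp n hσ hl2] at h
  calc gaussianPi n 0 σ {x | a ≤ ∑ i, (x i) ^ 2}
      = ENNReal.ofReal (gaussianPi n 0 σ {x | a ≤ ∑ i, (x i) ^ 2}).toReal :=
        (ENNReal.ofReal_toReal (measure_ne_top _ _)).symm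
    _ ≤ _ := ENNReal.ofReal_le_ofReal h

lemma tail_lb (n : ℕ) (hσ : 0 < σ) {a : ℝ} (hl : l ≤ 0) (hl2 : 2 * l * σ ^ 2 < 1) :
    gaussianPi n 0 σ {x | ∑ i, (x i) ^ 2 ≤ a} ≤
      ENNReal.ofReal (rexp (-l * a) * ((Real.sqrt (1 - 2 * l * σ ^ 2))⁻¹) ^ n) := by
  haveI : IsProbabilityMeasure (gaussianPi n 0 σ) :=
    haveI := fun i : Fin n =>
      instIsProbabilityMeasureGaussianReal ((0 : EuclideanSpace ℝ (Fin n)) i) ⟨σ ^ 2, sq_nonneg σ⟩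
    Measure.isProbabilityMeasure_map (WithLp.measurable_toLp 2 _).aemeasurable
  have h := measure_le_le_exp_mul_mgf
    (X := fun x : EuclideanSpace ℝ (Fin n) => ∑ i, (x i) ^ 2)
    (μ := gaussianPi n 0 σ) (t := l) a hl (pi_exp_integrable n hσ hl2)
  rw [show mgf (fun x : EuclideanSpace ℝ (Fin n) => ∑ i, (x i) ^ 2) (gaussianPi n 0 σ) l
      = ∫ x, rexp (l * ∑ i, (x i) ^ 2) ∂(gaussianPi n 0 σ) from rfl, pi_exp n hσ hl2] at h
  calc gaussianPi n 0 σ {x | ∑ i, (x i) ^ 2 ≤ a}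
      = ENNReal.ofReal (gaussianPi n 0 σ {x | ∑ i, (x i) ^ 2 ≤ a}).toReal :=
        (ENNReal.ofReal_toReal (measure_ne_top _ _)).symm
    _ ≤ _ := ENNReal.ofReal_le_ofReal h

end Aux

lemma norm_sq_eq_sum {n : ℕ} (x : EuclideanSpace ℝ (Fin n)) : ‖x‖ ^ 2 = ∑ i, (x i) ^ 2 := by
  rw [EuclideanSpace.norm_eq, Real.sq_sqrt (Finset.sum_nonneg fun i _ => sq_nonneg _)]
  simp [sq_abs]

lemma main_bound (n : ℕ) (σ : ℝ) (hσ : 0 < σ) (t : ℝ) (ht : 0 ≤ t) :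
    gaussianPi n 0 σ {x | t ≤ |‖x‖ - σ * Real.sqrt n|} ≤
      ENNReal.ofReal (2 * rexp (-(1/2) * t ^ 2 / σ ^ 2)) := by
  haveI : IsProbabilityMeasure (gaussianPi n 0 σ) :=
    haveI := fun i : Fin n =>
      instIsProbabilityMeasureGaussianReal ((0 : EuclideanSpace ℝ (Fin n)) i) ⟨σ ^ 2, sq_nonneg σ⟩
    Measure.isProbabilityMeasure_map (WithLp.measurable_toLp 2 _).aemeasurable
  rcases ht.eq_or_lt with h0 | ht
  · subst h0
    calc gaussianPi n 0 σ _ ≤ 1 := prob_le_one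
      _ ≤ ENNReal.ofReal (2 * rexp (-(1/2) * 0 ^ 2 / σ ^ 2)) := by
          rw [show -(1/2) * (0:ℝ) ^ 2 / σ ^ 2 = 0 by ring, Real.exp_zero, mul_one,
            ENNReal.ofReal_ofNat]
          exact one_le_two
  rcases Nat.eq_zero_or_pos n with hn | hn
  · subst hn
    have : {x : EuclideanSpace ℝ (Fin 0) | t ≤ |‖x‖ - σ * Real.sqrt ((0:ℕ):ℝ)|} = ∅ := by
      ext x
      have hx : ‖x‖ = 0 := by rw [EuclideanSpace.norm_eq]; simp
      simp only [Set.mem_setOf_eq, Set.mem_empty_iff_false, iff_false, not_le, hx,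
        Nat.cast_zero, Real.sqrt_zero, mul_zero, sub_zero, abs_zero]
      exact ht
    rw [this]
    simp
  -- n ≥ 1, t > 0
  have hn' : (0:ℝ) < Real.sqrt n := Real.sqrt_pos.mpr (by exact_mod_cast hn)
  have hσn : (0:ℝ) < σ * Real.sqrt n := by positivity
  obtain ⟨s, hs_def⟩ : ∃ s : ℝ, s = t / (σ * Real.sqrt n) := ⟨_, rfl⟩
  have hs : 0 < s := by rw [hs_def]; exact div_pos ht hσn
  have hts : t = s * (σ * Real.sqrt n) := by rw [hs_def]; field_simp
  have hnn : (Real.sqrt n) ^ 2 = (n:ℝ) := Real.sq_sqrt (Nat.cast_nonneg n)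
  have hn0 : ((n:ℝ)) ≠ 0 := by positivity
  have hs2 : s ^ 2 = t ^ 2 / (σ ^ 2 * n) := by
    rw [hs_def, div_pow, mul_pow, hnn]
  have hns : (n:ℝ) * s ^ 2 = t ^ 2 / σ ^ 2 := by
    rw [hs2]
    field_simp
  have hexp_eq : -(1/2) * t ^ 2 / σ ^ 2 = -((n:ℝ) * s ^ 2 / 2) := by
    linear_combination (1/2) * hns
  set U : Set (EuclideanSpace ℝ (Fin n)) := {x | (σ * Real.sqrt n + t) ^ 2 ≤ ∑ i, (x i) ^ 2}
  set L : Set (EuclideanSpace ℝ (Fin n)) := {x | ‖x‖ ≤ σ * Real.sqrt n - t}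
  have hsub : {x : EuclideanSpace ℝ (Fin n) | t ≤ |‖x‖ - σ * Real.sqrt n|} ⊆ U ∪ L := by
    intro x hx
    have hx' : t ≤ |‖x‖ - σ * Real.sqrt n| := hx
    rcases le_abs.mp hx' with h | h
    · left
      show (σ * Real.sqrt n + t) ^ 2 ≤ ∑ i, (x i) ^ 2
      rw [← norm_sq_eq_sum]
      have h1 : σ * Real.sqrt n + t ≤ ‖x‖ := by linarith
      exact pow_le_pow_left₀ (by positivity) h1 2
    · right
      show ‖x‖ ≤ σ * Real.sqrt n - t
      linarith
  refine (measure_mono hsub).trans ((measure_union_le U L).trans ?_)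
  have hU : gaussianPi n 0 σ U ≤ ENNReal.ofReal (rexp (-((n:ℝ) * s ^ 2 / 2))) := by
    obtain ⟨lu, hlu_def⟩ : ∃ lu : ℝ, lu = (1 - ((1 + s) ^ 2)⁻¹) / (2 * σ ^ 2) := ⟨_, rfl⟩
    have h1s : (0:ℝ) < 1 + s := by linarith
    have hinv1 : ((1 + s) ^ 2)⁻¹ ≤ 1 := by
      rw [inv_le_one_iff₀]; right; nlinarith
    have hinv0 : (0:ℝ) < ((1 + s) ^ 2)⁻¹ := by positivity
    have hlu0 : 0 ≤ lu := by
      rw [hlu_def]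
      apply div_nonneg (by linarith) (by positivity)
    have hlu2 : 2 * lu * σ ^ 2 = 1 - ((1 + s) ^ 2)⁻¹ := by
      rw [hlu_def]; field_simp
    have hlu2' : 2 * lu * σ ^ 2 < 1 := by rw [hlu2]; linarith
    refine (tail_ub n hσ hlu0 hlu2').trans (ENNReal.ofReal_le_ofReal ?_)
    have hsqrt : (Real.sqrt (1 - 2 * lu * σ ^ 2))⁻¹ = 1 + s := by
      rw [hlu2, show (1:ℝ) - (1 - ((1 + s) ^ 2)⁻¹) = ((1 + s) ^ 2)⁻¹ by ring,
        Real.sqrt_inv, Real.sqrt_sq h1s.le, inv_inv]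
    rw [hsqrt]
    have ha : (σ * Real.sqrt n + t) ^ 2 = σ ^ 2 * n * (1 + s) ^ 2 := by
      rw [hts]; linear_combination σ ^ 2 * (1 + s) ^ 2 * hnn
    have hexp : -lu * (σ * Real.sqrt n + t) ^ 2 = -((n:ℝ) * ((1 + s) ^ 2 - 1) / 2) := by
      rw [ha, hlu_def]
      field_simp
    rw [hexp]
    calc rexp (-((n:ℝ) * ((1 + s) ^ 2 - 1) / 2)) * (1 + s) ^ n
        ≤ rexp (-((n:ℝ) * ((1 + s) ^ 2 - 1) / 2)) * rexp s ^ n := by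
          have : (1 + s) ≤ rexp s := by
            have := Real.add_one_le_exp s; linarith
          exact mul_le_mul_of_nonneg_left (pow_le_pow_left₀ h1s.le this n) (Real.exp_nonneg _)
      _ = rexp (-((n:ℝ) * ((1 + s) ^ 2 - 1) / 2) + (n:ℝ) * s) := by
          rw [← Real.exp_nat_mul, ← Real.exp_add]
      _ ≤ rexp (-((n:ℝ) * s ^ 2 / 2)) := by
          apply Real.exp_le_exp.mpr
          nlinarith [Nat.cast_nonneg (α := ℝ) n]
  have hL : gaussianPi n 0 σ L ≤ ENNReal.ofReal (rexp (-((n:ℝ) * s ^ 2 / 2))) := by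
    rcases lt_trichotomy (σ * Real.sqrt n) t with hc | hc | hc
    · -- L is empty
      have : L = ∅ := by
        ext x
        simp only [L, Set.mem_setOf_eq, Set.mem_empty_iff_false, iff_false, not_le]
        have := norm_nonneg x
        linarith
      rw [this]
      simp
    · -- t = σ√n, s = 1
      have hs1 : s = 1 := by rw [hs_def, ← hc, div_self hσn.ne']
      obtain ⟨ll, hll_def⟩ : ∃ ll : ℝ, ll = -((rexp 2 - 1) / (2 * σ ^ 2)) := ⟨_, rfl⟩
      have he1 : (1:ℝ) < rexp 2 := by
        have := Real.add_one_le_exp (2:ℝ); linarith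
      have hll0 : ll ≤ 0 := by
        rw [hll_def, neg_nonpos]
        apply div_nonneg (by linarith) (by positivity)
      have hll2 : 2 * ll * σ ^ 2 = 1 - rexp 2 := by
        rw [hll_def]; field_simp; ring
      have hll2' : 2 * ll * σ ^ 2 < 1 := by rw [hll2]; linarith
      have hLsub : L ⊆ {x | ∑ i, (x i) ^ 2 ≤ 0} := by
        intro x hx
        show ∑ i, (x i) ^ 2 ≤ 0
        rw [← norm_sq_eq_sum]
        have hx' : ‖x‖ ≤ 0 := by
          have : ‖x‖ ≤ σ * Real.sqrt n - t := hx
          linarith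
        nlinarith [norm_nonneg x]
      refine (measure_mono hLsub).trans ((tail_lb n hσ hll0 hll2').trans
        (ENNReal.ofReal_le_ofReal ?_))
      have hsqrt : (Real.sqrt (1 - 2 * ll * σ ^ 2))⁻¹ = rexp (-1) := by
        rw [hll2, show (1:ℝ) - (1 - rexp 2) = rexp 2 by ring,
          show rexp 2 = (rexp 1) ^ 2 by rw [← Real.exp_nat_mul]; norm_num,
          Real.sqrt_sq (Real.exp_nonneg 1), ← Real.exp_neg]
      rw [hsqrt, mul_zero, Real.exp_zero, one_mul, ← Real.exp_nat_mul, hs1]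
      apply Real.exp_le_exp.mpr
      have : (1:ℝ) ≤ (n:ℝ) := by exact_mod_cast hn
      nlinarith
    · -- t < σ√n, s < 1
      have hs1 : s < 1 := by
        rw [hs_def, div_lt_one hσn]; exact hc
      have h1s : (0:ℝ) < 1 - s := by linarith
      obtain ⟨ll, hll_def⟩ : ∃ ll : ℝ, ll = -((((1 - s) ^ 2)⁻¹ - 1) / (2 * σ ^ 2)) := ⟨_, rfl⟩
      have hinv1 : (1:ℝ) ≤ ((1 - s) ^ 2)⁻¹ := by
        rw [one_le_inv_iff₀]
        constructor
        · positivity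
        · nlinarith
      have hll0 : ll ≤ 0 := by
        rw [hll_def, neg_nonpos]
        apply div_nonneg (by linarith) (by positivity)
      have hll2 : 2 * ll * σ ^ 2 = 1 - ((1 - s) ^ 2)⁻¹ := by
        rw [hll_def]; field_simp; ring
      have hll2' : 2 * ll * σ ^ 2 < 1 := by
        rw [hll2]
        have : (0:ℝ) < ((1 - s) ^ 2)⁻¹ := by positivity
        linarith
      have hLsub : L ⊆ {x | ∑ i, (x i) ^ 2 ≤ (σ * Real.sqrt n - t) ^ 2} := by
        intro x hx
        show ∑ i, (x i) ^ 2 ≤ (σ * Real.sqrt n - t) ^ 2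
        rw [← norm_sq_eq_sum]
        exact pow_le_pow_left₀ (norm_nonneg x) hx 2
      refine (measure_mono hLsub).trans ((tail_lb n hσ hll0 hll2').trans
        (ENNReal.ofReal_le_ofReal ?_))
      have hsqrt : (Real.sqrt (1 - 2 * ll * σ ^ 2))⁻¹ = 1 - s := by
        rw [hll2, show (1:ℝ) - (1 - ((1 - s) ^ 2)⁻¹) = ((1 - s) ^ 2)⁻¹ by ring,
          Real.sqrt_inv, Real.sqrt_sq h1s.le, inv_inv]
      rw [hsqrt]
      have hb : (σ * Real.sqrt n - t) ^ 2 = σ ^ 2 * n * (1 - s) ^ 2 := by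
        rw [hts]; linear_combination σ ^ 2 * (1 - s) ^ 2 * hnn
      have hexp : -ll * (σ * Real.sqrt n - t) ^ 2 = (n:ℝ) * (1 - (1 - s) ^ 2) / 2 := by
        rw [hb, hll_def]
        field_simp
      rw [hexp]
      calc rexp ((n:ℝ) * (1 - (1 - s) ^ 2) / 2) * (1 - s) ^ n
          ≤ rexp ((n:ℝ) * (1 - (1 - s) ^ 2) / 2) * rexp (-s) ^ n := by
            have : (1 - s) ≤ rexp (-s) := by
              have := Real.add_one_le_exp (-s); linarith
            exact mul_le_mul_of_nonneg_left (pow_le_pow_left₀ h1s.le this n) (Real.exp_nonneg _)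
        _ = rexp ((n:ℝ) * (1 - (1 - s) ^ 2) / 2 + (n:ℝ) * (-s)) := by
            rw [← Real.exp_nat_mul, ← Real.exp_add]
        _ ≤ rexp (-((n:ℝ) * s ^ 2 / 2)) := by
            apply Real.exp_le_exp.mpr
            nlinarith [Nat.cast_nonneg (α := ℝ) n]
  calc gaussianPi n 0 σ U + gaussianPi n 0 σ L
      ≤ ENNReal.ofReal (rexp (-((n:ℝ) * s ^ 2 / 2)))
        + ENNReal.ofReal (rexp (-((n:ℝ) * s ^ 2 / 2))) := add_le_add hU hL
    _ = ENNReal.ofReal (2 * rexp (-(1/2) * t ^ 2 / σ ^ 2)) := by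
        rw [← ENNReal.ofReal_add (Real.exp_nonneg _) (Real.exp_nonneg _), hexp_eq]
        ring_nf

theorem gaussian_norm_concentration :
    (∃ c : ℝ, 0 < c ∧ ∀ (n : ℕ) (σ : ℝ), 0 < σ → ∀ t : ℝ, 0 ≤ t →
        gaussianPi n 0 σ {x | t ≤ |‖x‖ - σ * Real.sqrt n|} ≤
          ENNReal.ofReal (2 * Real.exp (-c * t ^ 2 / σ ^ 2))) ∧
      ∀ σ : ℝ, 0 < σ → ∀ δ : ℝ, 0 < δ →
        Filter.Tendsto
          (fun n : ℕ => gaussianPi n 0 σ {x | δ ≤ |‖x‖ / (σ * Real.sqrt n) - 1|})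
          Filter.atTop (nhds 0) := by
  constructor
  · exact ⟨1/2, by norm_num, fun n σ hσ t ht => by
      simpa using main_bound n σ hσ t ht⟩
  · intro σ hσ δ hδ
    have key : ∀ n : ℕ, 1 ≤ n →
        gaussianPi n 0 σ {x | δ ≤ |‖x‖ / (σ * Real.sqrt n) - 1|} ≤
          ENNReal.ofReal (2 * rexp (-(δ ^ 2 / 2) * n)) := by
      intro n hn
      have hn' : (0:ℝ) < Real.sqrt n := Real.sqrt_pos.mpr (by exact_mod_cast hn)
      have hσn : (0:ℝ) < σ * Real.sqrt n := by positivity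
      have hset : {x : EuclideanSpace ℝ (Fin n) | δ ≤ |‖x‖ / (σ * Real.sqrt n) - 1|}
          = {x | δ * (σ * Real.sqrt n) ≤ |‖x‖ - σ * Real.sqrt n|} := by
        ext x
        simp only [Set.mem_setOf_eq]
        rw [show ‖x‖ / (σ * Real.sqrt n) - 1 = (‖x‖ - σ * Real.sqrt n) / (σ * Real.sqrt n) by
          field_simp, abs_div, abs_of_pos hσn, le_div_iff₀ hσn]
      rw [hset]
      refine (main_bound n σ hσ _ (by positivity)).trans (ENNReal.ofReal_le_ofReal ?_)
      have hnn : (Real.sqrt n) ^ 2 = (n:ℝ) := Real.sq_sqrt (Nat.cast_nonneg n)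
      have : -(1/2) * (δ * (σ * Real.sqrt n)) ^ 2 / σ ^ 2 = -(δ ^ 2 / 2) * n := by
        field_simp
        linear_combination (-1) * hnn
      rw [this]
    have hlim : Filter.Tendsto (fun n : ℕ => ENNReal.ofReal (2 * rexp (-(δ ^ 2 / 2) * n)))
        Filter.atTop (nhds 0) := by
      have h1 : Filter.Tendsto (fun n : ℕ => (δ ^ 2 / 2) * (n:ℝ)) Filter.atTop Filter.atTop :=
        (tendsto_natCast_atTop_atTop).const_mul_atTop (by positivity)
      have h2 : Filter.Tendsto (fun n : ℕ => -(δ ^ 2 / 2) * (n:ℝ)) Filter.atTop Filter.atBot := by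
        simp only [neg_mul]
        exact Filter.tendsto_neg_atBot_iff.mpr h1
      have h3 : Filter.Tendsto (fun n : ℕ => 2 * rexp (-(δ ^ 2 / 2) * n))
          Filter.atTop (nhds 0) := by
        have := (Real.tendsto_exp_atBot.comp h2).const_mul (2:ℝ)
        simpa using this
      have := ENNReal.tendsto_ofReal (f := Filter.atTop) h3
      simpa using this
    refine tendsto_of_tendsto_of_tendsto_of_le_of_le' tendsto_const_nhds hlim ?_ ?_
    · exact Filter.Eventually.of_forall fun n => zero_le
    · filter_upwards [Filter.eventually_ge_atTop 1] with n hn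
      exact key n hn
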